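/- Fix integers a ≥ 2 and ℓ ≥ 0. Let G be a finite simple graph, S ⊆ V(G) with |S| ≥ a, f : S → ℕ with f(s) ≥ 1 for all s ∈ S, and A ⊆ S with |A| = a such that every vertex of A is adjacent in G to two leaves (degree-1 vertices) of G, neither of which lies in S. Let G' be obtained by affixing the fork gadget F(ℓ,a) to G at A, and let v denote the path head of the gadget. Then, for the fragile power domination process on G' with multiset placement M(S,f), Pr_q(v is observed) = Π_{w∈A}(1 − q^{f(w)}) as polynomials in q; moreover for every vertex v' of the appended path on ℓ vertices, Pr_q(v' is observed) = Pr_q(v is observed). -/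

import Mathlib

open Polynomial

/-- The closed neighborhood `N[S]` of a set of vertices. -/
def closedNbhd {V : Type*} (G : SimpleGraph V) (S : Set V) : Set V :=
  ⋃ v ∈ S, insert v (G.neighborSet v)

/-- A set `B` is closed under the zero forcing step: whenever `x ∈ B` has exactly one
neighbor `y` outside `B`, then `y` is already in `B`. -/
def PDClosed {V : Type*} (G : SimpleGraph V) (B : Set V) : Prop :=
  ∀ x ∈ B, ∀ y : V, G.neighborSet x \ B = {y} → y ∈ B

/-- `Obs G S` is the set of observed vertices of the power domination process started with
PMU placement `S`: the least superset of `N[S]` closed under the zero forcing step. -/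
def Obs {V : Type*} (G : SimpleGraph V) (S : Set V) : Set V :=
  ⋂₀ {B : Set V | closedNbhd G S ⊆ B ∧ PDClosed G B}

/-- The probability (as a polynomial in the failure probability `q`) that the vertex `u`
is observed under the multiset placement `M(S,f)`:
`Pr_q(u) = Σ_{T ⊆ S, u ∈ Obs(G;T)} q^{f(S∖T)} Π_{s∈T}(1 − q^{f(s)})`.
(For `T ⊆ S` we have `f(S∖T) = f(S) − f(T)`.) -/
noncomputable def prObs {V : Type*} (G : SimpleGraph V) (S : Finset V) (f : V → ℕ)
    (u : V) : Polynomial ℝ :=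
  ∑ T ∈ S.powerset,
    Set.indicator (Obs G ↑T)
      (fun _ => X ^ ((∑ v ∈ S, f v) - ∑ v ∈ T, f v) * ∏ v ∈ T, (1 - X ^ f v)) u

/-- The vertices of the graph obtained by affixing the fork gadget `F(ℓ,a)` to a graph on `V`:
the original vertices, `a` subdivision vertices, the center of the star, the path head, and
the `ℓ` vertices of the appended path. -/
inductive ForkVert (V : Type) (a ℓ : ℕ) : Type
  | orig : V → ForkVert V a ℓ
  | sub : Fin a → ForkVert V a ℓ
  | center : ForkVert V a ℓ
  | head : ForkVert V a ℓ
  | path : Fin ℓ → ForkVert V a ℓ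

/-- The adjacency generating relation of the fork-gadget extension: original edges of `G`;
the `i`-th affix vertex `e i` is adjacent to the `i`-th subdivision vertex; each subdivision
vertex is adjacent to the center; the center is adjacent to the path head; and the path head
starts the appended path on `ℓ` vertices. -/
def forkRel {V : Type} (G : SimpleGraph V) (a ℓ : ℕ) (e : Fin a → V) :
    ForkVert V a ℓ → ForkVert V a ℓ → Prop
  | ForkVert.orig u, ForkVert.orig v => G.Adj u v
  | ForkVert.orig u, ForkVert.sub i => u = e i
  | ForkVert.sub _, ForkVert.center => True
  | ForkVert.center, ForkVert.head => True
  | ForkVert.head, ForkVert.path j => (j : ℕ) = 0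
  | ForkVert.path j, ForkVert.path j' => (j' : ℕ) = (j : ℕ) + 1
  | _, _ => False

/-- The graph obtained from `G` by affixing the fork gadget `F(ℓ,a)` at the vertices
`e 0, …, e (a-1)`. -/
def forkGraph {V : Type} (G : SimpleGraph V) (a ℓ : ℕ) (e : Fin a → V) :
    SimpleGraph (ForkVert V a ℓ) :=
  SimpleGraph.fromRel (forkRel G a ℓ e)

/-- Embedding of the original vertex set into the extended one. -/
def origEmb (V : Type) (a ℓ : ℕ) : V ↪ ForkVert V a ℓ :=
  ⟨ForkVert.orig, fun x y h => by injection h⟩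

/-- Extension of a sensor multiplicity function to the extended vertex set (no sensors are
placed on gadget vertices, so the values there are irrelevant). -/
def liftF {V : Type} (a ℓ : ℕ) (f : V → ℕ) : ForkVert V a ℓ → ℕ
  | ForkVert.orig v => f v
  | _ => 1

open ForkVert

section Gadget

variable {V : Type} {G : SimpleGraph V} {a ℓ : ℕ} {e : Fin a ↪ V}

@[simp] lemma origEmb_apply (v : V) : origEmb V a ℓ v = orig v := rfl

@[simp] lemma liftF_orig (f : V → ℕ) (v : V) : liftF a ℓ f (orig v) = f v := rfl

lemma nbhd_sub (i : Fin a) :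
    (forkGraph G a ℓ ⇑e).neighborSet (sub i) = {orig (e i), center} := by
  ext z
  cases z <;> simp [forkGraph, forkRel, SimpleGraph.fromRel_adj, eq_comm]

lemma nbhd_center :
    (forkGraph G a ℓ ⇑e).neighborSet center =
      {z | (∃ i : Fin a, z = sub i) ∨ z = head} := by
  ext z
  cases z <;> simp [forkGraph, forkRel, SimpleGraph.fromRel_adj, eq_comm]

lemma nbhd_head :
    (forkGraph G a ℓ ⇑e).neighborSet head =
      {z | z = center ∨ ∃ j : Fin ℓ, (j : ℕ) = 0 ∧ z = path j} := by
  ext z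
  cases z <;> simp [forkGraph, forkRel, SimpleGraph.fromRel_adj, eq_comm]

lemma nbhd_path (j : Fin ℓ) :
    (forkGraph G a ℓ ⇑e).neighborSet (path j) =
      {z | ((j : ℕ) = 0 ∧ z = head) ∨
        ∃ j' : Fin ℓ, z = path j' ∧ ((j' : ℕ) = (j : ℕ) + 1 ∨ (j : ℕ) = (j' : ℕ) + 1)} := by
  ext z
  cases z <;>
    simp [forkGraph, forkRel, SimpleGraph.fromRel_adj, eq_comm, Fin.ext_iff]
  constructor
  · rintro ⟨hne, h⟩
    exact ⟨_, rfl, by omega⟩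
  · rintro ⟨j', h1, h⟩
    exact ⟨by omega, by omega⟩

lemma adj_orig (u : V) (z : ForkVert V a ℓ) :
    (forkGraph G a ℓ ⇑e).Adj (orig u) z ↔
      (∃ v, G.Adj u v ∧ z = orig v) ∨ ∃ i, u = e i ∧ z = sub i := by
  cases z <;> simp [forkGraph, forkRel, SimpleGraph.fromRel_adj, eq_comm]
  constructor
  · rintro ⟨hne, h | h⟩
    · exact h
    · exact h.symm
  · intro h; exact ⟨h.ne, Or.inl h⟩

lemma adj_orig_sub (i : Fin a) :
    (forkGraph G a ℓ ⇑e).Adj (orig (e i)) (sub i) := by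
  simp [forkGraph, forkRel, SimpleGraph.fromRel_adj]

lemma adj_center_sub (i : Fin a) :
    (forkGraph G a ℓ ⇑e).Adj center (sub i) := by
  simp [forkGraph, forkRel, SimpleGraph.fromRel_adj]

lemma adj_center_head :
    (forkGraph G a ℓ ⇑e).Adj (center : ForkVert V a ℓ) head := by
  simp [forkGraph, forkRel, SimpleGraph.fromRel_adj]

lemma mem_closedNbhd {W : Type*} {H : SimpleGraph W} {S : Set W} {z : W} :
    z ∈ closedNbhd H S ↔ ∃ v ∈ S, z = v ∨ H.Adj v z := by
  simp [closedNbhd, SimpleGraph.mem_neighborSet]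

end Gadget
section Gadget2

variable {V : Type} {G : SimpleGraph V} {a ℓ : ℕ} {e : Fin a ↪ V}

lemma gadget_mem_obs (ha : 0 < a) (T : Finset V) (hA : ∀ i : Fin a, e i ∈ T) :
    head ∈ Obs (forkGraph G a ℓ ⇑e) ↑(T.map (origEmb V a ℓ)) ∧
      ∀ j : Fin ℓ, path j ∈ Obs (forkGraph G a ℓ ⇑e) ↑(T.map (origEmb V a ℓ)) := by
  suffices h : ∀ B : Set (ForkVert V a ℓ),
      closedNbhd (forkGraph G a ℓ ⇑e) ↑(T.map (origEmb V a ℓ)) ⊆ B →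
      PDClosed (forkGraph G a ℓ ⇑e) B → head ∈ B ∧ ∀ j : Fin ℓ, path j ∈ B by
    constructor
    · exact Set.mem_sInter.mpr fun B hB => (h B hB.1 hB.2).1
    · exact fun j => Set.mem_sInter.mpr fun B hB => (h B hB.1 hB.2).2 j
  intro B hN hC
  have hmemT : ∀ w ∈ T, (orig w : ForkVert V a ℓ) ∈ (↑(T.map (origEmb V a ℓ)) : Set _) := by
    intro w hw; simp [hw]
  have horig : ∀ w ∈ T, (orig w : ForkVert V a ℓ) ∈ B := fun w hw =>
    hN (mem_closedNbhd.mpr ⟨orig w, hmemT w hw, Or.inl rfl⟩)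
  have hsub : ∀ i : Fin a, (sub i : ForkVert V a ℓ) ∈ B := fun i =>
    hN (mem_closedNbhd.mpr ⟨orig (e i), hmemT _ (hA i), Or.inr (adj_orig_sub i)⟩)
  have hcenter : (center : ForkVert V a ℓ) ∈ B := by
    by_cases hc : (center : ForkVert V a ℓ) ∈ B
    · exact hc
    apply hC (sub ⟨0, ha⟩) (hsub _) center
    rw [nbhd_sub]
    ext z
    simp only [Set.mem_diff, Set.mem_insert_iff, Set.mem_singleton_iff]
    constructor
    · rintro ⟨rfl | rfl, h2⟩
      · exact absurd (horig _ (hA _)) h2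
      · rfl
    · rintro rfl; exact ⟨Or.inr rfl, hc⟩
  have hhead : (head : ForkVert V a ℓ) ∈ B := by
    by_cases hh : (head : ForkVert V a ℓ) ∈ B
    · exact hh
    apply hC center hcenter head
    rw [nbhd_center]
    ext z
    simp only [Set.mem_diff, Set.mem_setOf_eq, Set.mem_singleton_iff]
    constructor
    · rintro ⟨⟨i, rfl⟩ | rfl, h2⟩
      · exact absurd (hsub i) h2
      · rfl
    · rintro rfl; exact ⟨Or.inr rfl, hh⟩
  have hpath : ∀ k : ℕ, ∀ hk : k < ℓ, (path ⟨k, hk⟩ : ForkVert V a ℓ) ∈ B := by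
    intro k
    induction k using Nat.strong_induction_on with
    | _ k ih =>
      intro hk
      by_cases hp : (path ⟨k, hk⟩ : ForkVert V a ℓ) ∈ B
      · exact hp
      rcases Nat.eq_zero_or_pos k with rfl | hkpos
      · apply hC head hhead
        rw [nbhd_head]
        ext z
        simp only [Set.mem_diff, Set.mem_setOf_eq, Set.mem_singleton_iff]
        constructor
        · rintro ⟨rfl | ⟨j, hj0, rfl⟩, h2⟩
          · exact absurd hcenter h2
          · congr 1; exact Fin.ext hj0
        · rintro rfl; exact ⟨Or.inr ⟨⟨0, hk⟩, rfl, rfl⟩, hp⟩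
      · have hk1 : k - 1 < ℓ := lt_of_le_of_lt (Nat.sub_le _ _) hk
        have hprev : (path ⟨k - 1, hk1⟩ : ForkVert V a ℓ) ∈ B :=
          ih (k - 1) (Nat.sub_lt hkpos one_pos) hk1
        apply hC (path ⟨k - 1, hk1⟩) hprev
        rw [nbhd_path]
        ext z
        simp only [Set.mem_diff, Set.mem_setOf_eq, Set.mem_singleton_iff]
        constructor
        · rintro ⟨⟨hz0, rfl⟩ | ⟨j', rfl, hj'⟩, h2⟩
          · exact absurd hhead h2
          · rcases hj' with hj' | hj'
            · have : j' = ⟨k, hk⟩ := Fin.ext (by simp; omega)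
              rw [this]
            · exfalso
              have hjk : (j' : ℕ) < k := by simp at hj'; omega
              have := ih (j' : ℕ) hjk j'.2
              rw [Fin.eta] at this
              exact h2 this
        · rintro rfl
          refine ⟨Or.inr ⟨⟨k, hk⟩, rfl, Or.inl (by simp; omega)⟩, hp⟩
  exact ⟨hhead, fun j => by have := hpath (j : ℕ) j.2; rwa [Fin.eta] at this⟩

end Gadget2
section Gadget3

variable {V : Type} {G : SimpleGraph V} {a ℓ : ℕ} {e : Fin a ↪ V}

lemma gadget_not_mem_obs (T : Finset V) (i₀ : Fin a) (hw : e i₀ ∉ T)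
    (l₁ l₂ : V) (hne : l₁ ≠ l₂) (hl₁T : l₁ ∉ T) (hl₂T : l₂ ∉ T)
    (hel : ∀ i : Fin a, e i ≠ l₁ ∧ e i ≠ l₂)
    (hn₁ : G.neighborSet l₁ = {e i₀}) (hn₂ : G.neighborSet l₂ = {e i₀}) :
    head ∉ Obs (forkGraph G a ℓ ⇑e) ↑(T.map (origEmb V a ℓ)) ∧
      ∀ j : Fin ℓ, path j ∉ Obs (forkGraph G a ℓ ⇑e) ↑(T.map (origEmb V a ℓ)) := by
  have hadj₁ : G.Adj (e i₀) l₁ := by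
    have : l₁ ∈ G.neighborSet l₁ → False := by simp
    have h : e i₀ ∈ G.neighborSet l₁ := by rw [hn₁]; rfl
    exact (SimpleGraph.mem_neighborSet _ _ _ |>.mp h).symm
  have hadj₂ : G.Adj (e i₀) l₂ := by
    have h : e i₀ ∈ G.neighborSet l₂ := by rw [hn₂]; rfl
    exact (SimpleGraph.mem_neighborSet _ _ _ |>.mp h).symm
  set Xs : Set (ForkVert V a ℓ) :=
    {z | z = sub i₀ ∨ z = head ∨ (∃ j, z = path j) ∨ z = orig l₁ ∨ z = orig l₂} with hXs
  have hsubX : (sub i₀ : ForkVert V a ℓ) ∈ Xs := Or.inl rfl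
  have hheadX : (head : ForkVert V a ℓ) ∈ Xs := Or.inr (Or.inl rfl)
  have hl₁X : (orig l₁ : ForkVert V a ℓ) ∈ Xs := Or.inr (Or.inr (Or.inr (Or.inl rfl)))
  have hmem : Xsᶜ ∈ {B : Set (ForkVert V a ℓ) |
      closedNbhd (forkGraph G a ℓ ⇑e) ↑(T.map (origEmb V a ℓ)) ⊆ B ∧
      PDClosed (forkGraph G a ℓ ⇑e) B} := by
    constructor
    · -- closedNbhd ⊆ Xsᶜ
      intro z hz
      rw [mem_closedNbhd] at hz
      obtain ⟨v, hv, hzv⟩ := hz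
      have hv' : ∃ w ∈ T, (orig w : ForkVert V a ℓ) = v := by simpa using hv
      obtain ⟨w, hwT, rfl⟩ := hv'
      intro hzX
      rcases hzv with rfl | hadj
      · rcases hzX with h | h | ⟨j, h⟩ | h | h <;> simp_all
      · rw [adj_orig] at hadj
        rcases hadj with ⟨v', hadj, rfl⟩ | ⟨i, hwi, rfl⟩
        · have hv12 : v' = l₁ ∨ v' = l₂ := by
            rcases hzX with h | h | ⟨j, h⟩ | h | h <;> simp_all
          rcases hv12 with h | h
          · have hmem' : w ∈ G.neighborSet l₁ := by rw [← h]; exact hadj.symm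
            rw [hn₁] at hmem'
            exact hw (hmem' ▸ hwT)
          · have hmem' : w ∈ G.neighborSet l₂ := by rw [← h]; exact hadj.symm
            rw [hn₂] at hmem'
            exact hw (hmem' ▸ hwT)
        · have hii : i = i₀ := by
            rcases hzX with h | h | ⟨j, h⟩ | h | h <;> simp_all
          exact hw (by rw [← hii, ← hwi]; exact hwT)
    · -- PDClosed
      intro x hx y hy
      have hyy : y ∈ (forkGraph G a ℓ ⇑e).neighborSet x \ Xsᶜ := by
        rw [hy]; rfl
      obtain ⟨hyadj, hyXs'⟩ := hyy
      have hyXs : y ∈ Xs := Set.not_notMem.mp hyXs'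
      by_contra hyB
      have hx' : x ∉ Xs := hx
      clear hyB
      cases x with
      | orig u =>
        have hu : u = e i₀ := by
          rw [SimpleGraph.mem_neighborSet, adj_orig] at hyadj
          rcases hyadj with ⟨v', hadj, rfl⟩ | ⟨i, rfl, rfl⟩
          · have hv12 : v' = l₁ ∨ v' = l₂ := by
              rcases hyXs with h | h | ⟨j, h⟩ | h | h <;> simp_all
            rcases hv12 with h | h
            · have hmem' : u ∈ G.neighborSet l₁ := by rw [← h]; exact hadj.symm
              rw [hn₁] at hmem'; exact hmem'
            · have hmem' : u ∈ G.neighborSet l₂ := by rw [← h]; exact hadj.symm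
              rw [hn₂] at hmem'; exact hmem'
          · have hii : i = i₀ := by
              rcases hyXs with h | h | ⟨j, h⟩ | h | h <;> simp_all
            rw [hii]
        subst hu
        have h1 : (sub i₀ : ForkVert V a ℓ) ∈
            (forkGraph G a ℓ ⇑e).neighborSet (orig (e i₀)) \ Xsᶜ :=
          ⟨adj_orig_sub i₀, Set.not_notMem.mpr hsubX⟩
        have h2 : (orig l₁ : ForkVert V a ℓ) ∈
            (forkGraph G a ℓ ⇑e).neighborSet (orig (e i₀)) \ Xsᶜ := by
          refine ⟨?_, Set.not_notMem.mpr hl₁X⟩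
          rw [SimpleGraph.mem_neighborSet, adj_orig]
          exact Or.inl ⟨l₁, hadj₁, rfl⟩
        rw [hy] at h1 h2
        rw [Set.mem_singleton_iff] at h1 h2
        exact absurd (h1.trans h2.symm) (by simp)
      | sub i =>
        have hii : i ≠ i₀ := fun h => hx' (Or.inl (by rw [h]))
        rw [SimpleGraph.mem_neighborSet] at hyadj
        rw [show (forkGraph G a ℓ ⇑e).Adj (sub i) y ↔ y ∈ (forkGraph G a ℓ ⇑e).neighborSet (sub i) from Iff.rfl, nbhd_sub] at hyadj
        rcases hyadj with rfl | rfl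
        · rcases hyXs with h | h | ⟨j, h⟩ | h | h <;> simp_all
        · rcases hyXs with h | h | ⟨j, h⟩ | h | h <;> simp_all
      | center =>
        have h1 : (sub i₀ : ForkVert V a ℓ) ∈
            (forkGraph G a ℓ ⇑e).neighborSet center \ Xsᶜ :=
          ⟨adj_center_sub i₀, Set.not_notMem.mpr hsubX⟩
        have h2 : (head : ForkVert V a ℓ) ∈
            (forkGraph G a ℓ ⇑e).neighborSet center \ Xsᶜ :=
          ⟨adj_center_head, Set.not_notMem.mpr hheadX⟩
        rw [hy] at h1 h2
        rw [Set.mem_singleton_iff] at h1 h2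
        exact absurd (h1.trans h2.symm) (by simp)
      | head => exact hx' hheadX
      | path j => exact hx' (Or.inr (Or.inr (Or.inl ⟨j, rfl⟩)))
  have hsub : Obs (forkGraph G a ℓ ⇑e) ↑(T.map (origEmb V a ℓ)) ⊆ Xsᶜ :=
    Set.sInter_subset_of_mem hmem
  exact ⟨fun h => (hsub h) hheadX,
    fun j h => (hsub h) (Or.inr (Or.inr (Or.inl ⟨j, rfl⟩)))⟩

end Gadget3
section Alg

lemma alg_sum {W : Type*} [DecidableEq W] (S A : Finset W) (hAS : A ⊆ S) (f : W → ℕ) :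
    ∑ T ∈ S.powerset,
        (if A ⊆ T then (X : Polynomial ℝ) ^ ((∑ v ∈ S, f v) - ∑ v ∈ T, f v) *
          ∏ v ∈ T, (1 - X ^ f v) else 0)
      = ∏ w ∈ A, (1 - (X : Polynomial ℝ) ^ f w) := by
  rw [← Finset.sum_filter]
  have key : ∀ T ∈ S.powerset.filter (fun T => A ⊆ T),
      (X : Polynomial ℝ) ^ ((∑ v ∈ S, f v) - ∑ v ∈ T, f v) * ∏ v ∈ T, (1 - X ^ f v)
        = (∏ w ∈ A, (1 - (X : Polynomial ℝ) ^ f w)) *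
          ((∏ v ∈ T \ A, (1 - X ^ f v)) * ∏ v ∈ (S \ A) \ (T \ A), X ^ f v) := by
    intro T hT
    rw [Finset.mem_filter, Finset.mem_powerset] at hT
    obtain ⟨hTS, hAT⟩ := hT
    have h1 : (S \ A) \ (T \ A) = S \ T := by
      ext x
      simp only [Finset.mem_sdiff]
      constructor
      · rintro ⟨⟨hxS, hxA⟩, h⟩
        exact ⟨hxS, fun hxT => h ⟨hxT, hxA⟩⟩
      · rintro ⟨hxS, hxT⟩
        exact ⟨⟨hxS, fun hxA => hxT (hAT hxA)⟩, fun h => hxT h.1⟩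
    have h2 : (X : Polynomial ℝ) ^ ((∑ v ∈ S, f v) - ∑ v ∈ T, f v)
        = ∏ v ∈ S \ T, (X : Polynomial ℝ) ^ f v := by
      rw [Finset.prod_pow_eq_pow_sum]
      congr 1
      have := Finset.sum_sdiff (f := f) hTS
      omega
    have h3 : (∏ v ∈ T, (1 - (X : Polynomial ℝ) ^ f v))
        = (∏ w ∈ A, (1 - (X : Polynomial ℝ) ^ f w)) * ∏ v ∈ T \ A, (1 - X ^ f v) := by
      rw [← Finset.prod_union (Finset.disjoint_sdiff)]
      congr 1
      rw [Finset.union_sdiff_of_subset hAT]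
    rw [h1, h2, h3]
    ring
  rw [Finset.sum_congr rfl key, ← Finset.mul_sum]
  have hbij : ∑ T ∈ S.powerset.filter (fun T => A ⊆ T),
      ((∏ v ∈ T \ A, (1 - (X : Polynomial ℝ) ^ f v)) * ∏ v ∈ (S \ A) \ (T \ A), X ^ f v)
      = ∑ U ∈ (S \ A).powerset,
        ((∏ v ∈ U, (1 - (X : Polynomial ℝ) ^ f v)) * ∏ v ∈ (S \ A) \ U, X ^ f v) := by
    refine Finset.sum_nbij' (fun T => T \ A) (fun U => A ∪ U) ?_ ?_ ?_ ?_ ?_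
    · intro T hT
      rw [Finset.mem_filter, Finset.mem_powerset] at hT
      rw [Finset.mem_powerset]
      exact Finset.sdiff_subset_sdiff hT.1 (le_refl A)
    · intro U hU
      rw [Finset.mem_powerset] at hU
      rw [Finset.mem_filter, Finset.mem_powerset]
      exact ⟨Finset.union_subset hAS (hU.trans (Finset.sdiff_subset)), Finset.subset_union_left⟩
    · intro T hT
      rw [Finset.mem_filter] at hT
      show A ∪ T \ A = T
      rw [Finset.union_sdiff_of_subset hT.2]
    · intro U hU
      rw [Finset.mem_powerset] at hU
      show (A ∪ U) \ A = U
      rw [Finset.union_sdiff_cancel_left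
        (Finset.disjoint_left.mpr fun x hxA hxU => (Finset.mem_sdiff.mp (hU hxU)).2 hxA)]
    · intro T hT; rfl
  rw [hbij]
  have := Finset.prod_add (fun v => (1 - (X : Polynomial ℝ) ^ f v)) (fun v => (X : Polynomial ℝ) ^ f v) (S \ A)
  simp only [sub_add_cancel, Finset.prod_const_one] at this
  rw [← this, mul_one]

end Alg
theorem stmt12 {V : Type} [Fintype V] (a ℓ : ℕ) (ha : 2 ≤ a)
    (G : SimpleGraph V) (S : Finset V) (hS : a ≤ S.card)
    (f : V → ℕ) (hf : ∀ v ∈ S, 1 ≤ f v)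
    (A : Finset V) (hAS : A ⊆ S) (hAcard : A.card = a)
    (e : Fin a ↪ V) (he : Finset.univ.map e = A)
    (hleaves : ∀ v ∈ A, ∃ l₁ l₂ : V, l₁ ≠ l₂ ∧ l₁ ∉ S ∧ l₂ ∉ S ∧
        G.neighborSet l₁ = {v} ∧ G.neighborSet l₂ = {v}) :
    prObs (forkGraph G a ℓ ⇑e) (S.map (origEmb V a ℓ)) (liftF a ℓ f) ForkVert.head
        = ∏ w ∈ A, (1 - X ^ f w) ∧
      ∀ j : Fin ℓ,
        prObs (forkGraph G a ℓ ⇑e) (S.map (origEmb V a ℓ)) (liftF a ℓ f)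
            (ForkVert.path j)
          = prObs (forkGraph G a ℓ ⇑e) (S.map (origEmb V a ℓ)) (liftF a ℓ f)
              ForkVert.head := by
  classical
  have ha0 : 0 < a := by omega
  have heA : ∀ i : Fin a, e i ∈ A := fun i => by
    rw [← he]; exact Finset.mem_map_of_mem e (Finset.mem_univ i)
  have heS : ∀ i : Fin a, e i ∈ S := fun i => hAS (heA i)
  have hAsub : ∀ T : Finset V, (A ⊆ T ↔ ∀ i : Fin a, e i ∈ T) := by
    intro T
    constructor
    · exact fun h i => h (heA i)
    · intro h w hwA
      rw [← he] at hwA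
      obtain ⟨i, _, rfl⟩ := Finset.mem_map.mp hwA
      exact h i
  have hchar : ∀ T : Finset V, T ⊆ S →
      ((ForkVert.head ∈ Obs (forkGraph G a ℓ ⇑e) ↑(T.map (origEmb V a ℓ)) ↔ A ⊆ T) ∧
        ∀ j : Fin ℓ,
          (ForkVert.path j ∈ Obs (forkGraph G a ℓ ⇑e) ↑(T.map (origEmb V a ℓ)) ↔ A ⊆ T)) := by
    intro T hTS
    by_cases hAT : A ⊆ T
    · have h := gadget_mem_obs (G := G) (ℓ := ℓ) (e := e) ha0 T
        (fun i => (hAsub T).mp hAT i)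
      exact ⟨⟨fun _ => hAT, fun _ => h.1⟩, fun j => ⟨fun _ => hAT, fun _ => h.2 j⟩⟩
    · obtain ⟨w, hwA, hwT⟩ := Finset.not_subset.mp hAT
      have hwA' := hwA
      rw [← he] at hwA'
      obtain ⟨i₀, _, rfl⟩ := Finset.mem_map.mp hwA'
      obtain ⟨l₁, l₂, hne, hl₁S, hl₂S, hn₁, hn₂⟩ := hleaves _ hwA
      have h := gadget_not_mem_obs (G := G) (ℓ := ℓ) (e := e) T i₀ hwT l₁ l₂ hne
        (fun h => hl₁S (hTS h)) (fun h => hl₂S (hTS h))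
        (fun i => ⟨fun h => hl₁S (h ▸ heS i), fun h => hl₂S (h ▸ heS i)⟩) hn₁ hn₂
      exact ⟨⟨fun hh => absurd hh h.1, fun hh => absurd hh hAT⟩,
        fun j => ⟨fun hh => absurd hh (h.2 j), fun hh => absurd hh hAT⟩⟩
  -- rewrite prObs in terms of the if-sum
  have hpow : (S.map (origEmb V a ℓ)).powerset
      = S.powerset.map ⟨Finset.map (origEmb V a ℓ), Finset.map_injective (origEmb V a ℓ)⟩ := by
    ext T'
    simp only [Finset.mem_powerset, Finset.mem_map, Function.Embedding.coeFn_mk]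
    rw [Finset.subset_map_iff]
    constructor
    · rintro ⟨u, hu, rfl⟩; exact ⟨u, hu, rfl⟩
    · rintro ⟨u, hu, rfl⟩; exact ⟨u, hu, rfl⟩
  have hpr : ∀ z : ForkVert V a ℓ,
      (∀ T : Finset V, T ⊆ S →
        (z ∈ Obs (forkGraph G a ℓ ⇑e) ↑(T.map (origEmb V a ℓ)) ↔ A ⊆ T)) →
      prObs (forkGraph G a ℓ ⇑e) (S.map (origEmb V a ℓ)) (liftF a ℓ f) z
        = ∑ T ∈ S.powerset,
            (if A ⊆ T then (X : Polynomial ℝ) ^ ((∑ v ∈ S, f v) - ∑ v ∈ T, f v) *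
              ∏ v ∈ T, (1 - X ^ f v) else 0) := by
    intro z hz
    unfold prObs
    rw [hpow, Finset.sum_map]
    refine Finset.sum_congr rfl fun T hT => ?_
    have hTS : T ⊆ S := Finset.mem_powerset.mp hT
    simp only [Function.Embedding.coeFn_mk]
    have hsum1 : ∑ v ∈ S.map (origEmb V a ℓ), liftF a ℓ f v = ∑ v ∈ S, f v := by
      rw [Finset.sum_map]; rfl
    have hsum2 : ∑ v ∈ T.map (origEmb V a ℓ), liftF a ℓ f v = ∑ v ∈ T, f v := by
      rw [Finset.sum_map]; rfl
    have hprod : ∏ v ∈ T.map (origEmb V a ℓ), (1 - (X : Polynomial ℝ) ^ liftF a ℓ f v)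
        = ∏ v ∈ T, (1 - X ^ f v) := by
      rw [Finset.prod_map]; rfl
    by_cases hAT : A ⊆ T
    · rw [Set.indicator_of_mem ((hz T hTS).mpr hAT), if_pos hAT, hsum1, hsum2, hprod]
    · rw [Set.indicator_of_notMem (fun h => hAT ((hz T hTS).mp h)), if_neg hAT]
  constructor
  · rw [hpr ForkVert.head (fun T hTS => (hchar T hTS).1), alg_sum S A hAS f]
  · intro j
    rw [hpr ForkVert.head (fun T hTS => (hchar T hTS).1),
      hpr (ForkVert.path j) (fun T hTS => (hchar T hTS).2 j)]
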